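/- For a formal pseudo-difference operator A, the strictly negative part of Δ⁻¹A satisfies P_{<0}(Δ⁻¹A) = Δ⁻¹ P_{<0}(A) + Δ⁻¹ P_0(A*), where P_{<0} projects onto terms of negative order in Δ, P_0 extracts the zero-order coefficient, and A* is the formal adjoint. -/

import Mathlib

namespace DiscreteKP

/-- The space `F` of functions on the lattice `ℤ`. -/
abbrev F := ℤ → ℝ

/-- A formal pseudo-difference operator, represented by its coefficients in the
shift basis: `a k n` is the coefficient of `Λ^k` at the site `n`
(so `a` represents `Σ_k a_k(n) Λ^k`, with `Δ = Λ - 1`). -/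
abbrev PDO := ℤ → ℤ → ℝ

/-- Composition in the ring of formal pseudo-difference operators. -/
noncomputable def pmul (a b : PDO) : PDO := fun m n => ∑' j : ℤ, a j n * b (m - j) (n + j)

/-- A function viewed as a (multiplication) operator. -/
def ofFun (f : F) : PDO := fun k n => if k = 0 then f n else 0

/-- The difference operator `Δ = Λ - 1` as a pseudo-difference operator. -/
def pdelta : PDO := fun m _ => if m = 1 then 1 else if m = 0 then -1 else 0

/-- The formal inverse `Δ⁻¹ = Σ_{k<0} Λ^k`. -/
def pdeltaInv : PDO := fun m _ => if m < 0 then 1 else 0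

/-- The formal adjoint: `(f Λ^k)* = Λ^{-k} ∘ f`. -/
def adj (a : PDO) : PDO := fun m n => a (-m) (n + m)

/-- The action of a pseudo-difference operator on a function (when defined). -/
noncomputable def applyOp (a : PDO) (f : F) : F := fun n => ∑' m : ℤ, a m n * f (n + m)

/-- Projection `P_{<0}` onto the part of strictly negative order in `Δ`
(in the shift basis this is the part with strictly negative powers of `Λ`). -/
def Pneg (a : PDO) : PDO := fun m n => if m < 0 then a m n else 0

/-- Projection `R_+` onto the nonnegative (local difference operator) part. -/
def Ppos (a : PDO) : PDO := fun m n => if 0 ≤ m then a m n else 0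

/-- `P_0`: the zero-order coefficient (in `Δ`) of an operator of `F(Δ)`,
namely `Σ_{k ≥ 0} a_k` in the shift basis. -/
noncomputable def P0 (a : PDO) : F := fun n => ∑' k : ℕ, a (k : ℤ) n

/-- `P_0(A*)`: the zero-order coefficient (in `Δ*`) of the formal adjoint of `a`,
namely `Σ_{m ≤ 0} (adj a)_m` in the shift basis. -/
noncomputable def P0star (a : PDO) : F := fun n => ∑' k : ℕ, adj a (-(k : ℤ)) n

/-- The residue: the coefficient of `Δ⁻¹`. -/
def res (a : PDO) : F := fun n => a (-1) n

/-- The shift operator `Λ` on functions. -/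
def sh (f : F) : F := fun n => f (n + 1)

/-- The backward shift `Λ⁻¹` on functions. -/
def shInv (f : F) : F := fun n => f (n - 1)

/-- The difference operator `Δ` on functions. -/
def dif (f : F) : F := fun n => f (n + 1) - f n

/-- A genuine formal pseudo-difference operator: finitely many positive-order terms. -/
def BoundedAbove (a : PDO) : Prop := ∃ d : ℤ, ∀ m n : ℤ, d < m → a m n = 0

/-- A local difference operator: a finite sum `Σ_{j=0}^d a_j Δ^j`. -/
def IsLocal (a : PDO) : Prop := ∃ d : ℤ, ∀ m n : ℤ, (m < 0 ∨ d < m) → a m n = 0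

/-- The rank-one operator `φ Δ⁻¹ ψ`. -/
noncomputable def ghost (φ ψ : F) : PDO := pmul (ofFun φ) (pmul pdeltaInv (ofFun ψ))

end DiscreteKP

namespace DiscreteKP

/-- `P_{<0}(Δ⁻¹A) = Δ⁻¹ P_{<0}(A) + Δ⁻¹ P_0(A*)` for a formal
pseudo-difference operator `A`, where `P_0(A*)` is the zero-order
coefficient of the formal adjoint of `A`. -/
theorem Pneg_deltaInv_mul (a : PDO) (ha : BoundedAbove a) :
    Pneg (pmul pdeltaInv a) =
      pmul pdeltaInv (Pneg a) + pmul pdeltaInv (ofFun (P0star a)) := by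
  obtain ⟨d, hd⟩ := ha
  funext m n
  have hsecond : pmul pdeltaInv (ofFun (P0star a)) m n
      = if m < 0 then P0star a (n + m) else 0 := by
    unfold pmul pdeltaInv ofFun
    rw [tsum_eq_single m]
    · by_cases hm : m < 0 <;> simp [hm]
    · intro j hj
      have h1 : m - j ≠ 0 := sub_ne_zero.mpr (Ne.symm hj)
      simp [h1]
  simp only [Pi.add_apply, hsecond]
  by_cases hm : m < 0
  · have hL : Pneg (pmul pdeltaInv a) m n
        = ∑' j : ℤ, (if j < 0 then a (m - j) (n + j) else 0) := by
      simp only [Pneg, pmul, pdeltaInv, if_pos hm]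
      exact tsum_congr fun j => by split <;> simp
    have hG : pmul pdeltaInv (Pneg a) m n
        = ∑' j : ℤ, (if m < j ∧ j < 0 then a (m - j) (n + j) else 0) := by
      simp only [pmul, pdeltaInv, Pneg]
      refine tsum_congr fun j => ?_
      by_cases hj : j < 0
      · by_cases hjm : m < j
        · have h2 : m - j < 0 := by omega
          simp [hj, hjm, h2]
        · have h2 : ¬ m - j < 0 := by omega
          simp [hj, hjm, h2]
      · simp [hj]
    have hH : P0star a (n + m)
        = ∑' j : ℤ, (if j ≤ m then a (m - j) (n + j) else 0) := by
      unfold P0star adj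
      have hinj : Function.Injective (fun k : ℕ => m - (k : ℤ)) := by
        intro x y hxy
        simp only at hxy
        omega
      have hsupp : Function.support (fun j : ℤ => if j ≤ m then a (m - j) (n + j) else 0)
          ⊆ Set.range (fun k : ℕ => m - (k : ℤ)) := by
        intro j hj
        simp only [Function.mem_support, ne_eq, ite_eq_right_iff, not_forall] at hj
        obtain ⟨h1, -⟩ := hj
        exact ⟨(m - j).toNat, by simp only; omega⟩
      rw [← Function.Injective.tsum_eq hinj hsupp]
      refine tsum_congr fun k => ?_
      have h1 : (m - (k : ℤ)) ≤ m := by omega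
      rw [if_pos h1]
      congr 1 <;> omega
    have hGs : Summable (fun j : ℤ => (if m < j ∧ j < 0 then a (m - j) (n + j) else 0)) := by
      apply summable_of_ne_finset_zero (s := Finset.Icc (m - d) 0)
      intro j hj
      simp only [Finset.mem_Icc, not_and_or, not_le] at hj
      by_cases h1 : m < j ∧ j < 0
      · rw [if_pos h1]
        exact hd _ _ (by omega)
      · simp [h1]
    have hHs : Summable (fun j : ℤ => (if j ≤ m then a (m - j) (n + j) else 0)) := by
      apply summable_of_ne_finset_zero (s := Finset.Icc (m - d) m)
      intro j hj
      simp only [Finset.mem_Icc, not_and_or, not_le] at hj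
      by_cases h1 : j ≤ m
      · rw [if_pos h1]
        exact hd _ _ (by omega)
      · simp [h1]
    rw [hL, hG, if_pos hm, hH, ← hGs.tsum_add hHs]
    refine tsum_congr fun j => ?_
    rcases lt_or_ge j 0 with hj | hj
    · rcases le_or_gt j m with hjm | hjm
      · rw [if_pos hj, if_neg (by omega), if_pos hjm, zero_add]
      · rw [if_pos hj, if_pos ⟨hjm, hj⟩, if_neg (by omega), add_zero]
    · rw [if_neg (by omega), if_neg (by omega), if_neg (by omega), add_zero]
  · rw [if_neg hm, add_zero]
    have h0 : Pneg (pmul pdeltaInv a) m n = 0 := by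
      simp [Pneg, hm]
    rw [h0]
    symm
    simp only [pmul, pdeltaInv, Pneg]
    have : ∀ j : ℤ, (if j < 0 then (1 : ℝ) else 0) *
        (if m - j < 0 then a (m - j) (n + j) else 0) = 0 := by
      intro j
      by_cases hj : j < 0
      · rw [if_pos hj, if_neg (by omega : ¬ m - j < 0), mul_zero]
      · rw [if_neg hj, zero_mul]
    simp only [this, tsum_zero]

end DiscreteKP
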